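/- In the setting of a Feasibility Pump cycle where ‖x̄^{i} − x̃^{i}‖₁ = ‖x̄^{i+1} − x̃^{i}‖₁ = ‖x̄^{i+1} − x̃^{i+1}‖₁, if x̃ⁱ is the all-ones vector and J ⊆ [n] is the (nonempty) set of coordinates where x̃^{i+1} differs from x̃ⁱ (so x̃^{i+1}_j = 0 for j ∈ J), then Σ_{j∈J} x̄^{i+1}_j = |J|/2. -/
import Mathlib


/-- Key counting identity in the proof that long cycles cannot occur: along a
cycle with `x̃ⁱ` the all-ones vector, the coordinates of `x̄^{i+1}` in the set
`J` of flipped coordinates sum to `|J|/2`. -/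
theorem cycle_counting_identity (n : ℕ) (xbi xbip1 xti xtip1 : Fin n → ℝ)
    (hbox : ∀ j, 0 ≤ xbip1 j ∧ xbip1 j ≤ 1)
    (hones : ∀ j, xti j = 1)
    (hbin : ∀ j, xtip1 j = 0 ∨ xtip1 j = 1)
    (hround : ∀ j, xtip1 j = ((⌊xbip1 j + 1/2⌋ : ℤ) : ℝ))
    (J : Finset (Fin n))
    (hJ : J = Finset.univ.filter (fun j => xtip1 j ≠ xti j))
    (hJzero : ∀ j ∈ J, xtip1 j = 0)
    (hJne : J.Nonempty)
    (heq1 : ∑ j, |xbi j - xti j| = ∑ j, |xbip1 j - xti j|)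
    (heq2 : ∑ j, |xbip1 j - xti j| = ∑ j, |xbip1 j - xtip1 j|) :
    ∑ j ∈ J, xbip1 j = (J.card : ℝ) / 2 := by
  have hsub : J ⊆ Finset.univ := Finset.subset_univ J
  rw [← Finset.sum_sdiff hsub, ← Finset.sum_sdiff hsub] at heq2
  have hoff : ∀ j ∈ Finset.univ \ J, |xbip1 j - xti j| = |xbip1 j - xtip1 j| := by
    intro j hj
    have : xtip1 j = xti j := by
      by_contra h
      have : j ∈ J := by rw [hJ]; simp [h]
      exact (Finset.mem_sdiff.mp hj).2 this
    rw [this]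
  rw [Finset.sum_congr rfl hoff] at heq2
  have heq : ∑ j ∈ J, |xbip1 j - xti j| = ∑ j ∈ J, |xbip1 j - xtip1 j| := by
    linarith [heq2]
  have h1 : ∑ j ∈ J, |xbip1 j - xti j| = ∑ j ∈ J, (1 - xbip1 j) := by
    refine Finset.sum_congr rfl fun j hj => ?_
    rw [hones j, abs_of_nonpos (by linarith [(hbox j).2])]; ring
  have h2 : ∑ j ∈ J, |xbip1 j - xtip1 j| = ∑ j ∈ J, xbip1 j := by
    refine Finset.sum_congr rfl fun j hj => ?_
    rw [hJzero j hj, sub_zero, abs_of_nonneg (hbox j).1]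
  rw [h1, h2, Finset.sum_sub_distrib, Finset.sum_const, nsmul_eq_mul, mul_one] at heq
  linarith [heq]
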